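/- Let k ≥ 2 and 1 ≤ r ≤ k-1 be integers, let N, β₁, β₂, γ, α, λ > 0 be reals, let I₁ > 0, and let S₀, S₁, …, S_k be real numbers satisfying: 0 = -(β₁/N)S₀I₁ + kα·S₁ - λS₀; kα·S_{i+1} = (kα + λ)·S_i for 1 ≤ i ≤ r; S_{i+1} = S_i for r+1 ≤ i ≤ k-1; 0 = γI₁ - kα·S_k + λ·Σ_{i=0}^{r} S_i; (β₁/N)·S₀ = γ; and Σ_{i=0}^{k} S_i + I₁ = N. Then (β₂/(γN))·Σ_{i=0}^{r} S_i = (β₂/β₁)·((γλ(k-r) + (β₁ + λ)kα)(kα + λ)^r - β₁(kα)^{r+1})/(γ(kα + (k-r)λ)(kα + λ)^r + (λ - γ)(kα)^{r+1}). -/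

import Mathlib

set_option maxHeartbeats 1000000


/-- Strain 1-only endemic steady state of the integrated immunity model: the competitive
reproduction number of Strain 2 in the presence of Strain 1. -/
theorem integrated_strain1_R21
    (k r : ℕ) (hk : 2 ≤ k) (hr1 : 1 ≤ r) (hrk : r ≤ k - 1)
    (N β₁ β₂ γ α lam : ℝ) (hN : 0 < N) (hβ₁ : 0 < β₁) (hβ₂ : 0 < β₂) (hγ : 0 < γ)
    (hα : 0 < α) (hlam : 0 < lam)
    (I₁ : ℝ) (hI₁ : 0 < I₁)
    (S : ℕ → ℝ)
    (h1 : 0 = -(β₁ / N) * S 0 * I₁ + (k : ℝ) * α * S 1 - lam * S 0)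
    (h2 : ∀ i : ℕ, 1 ≤ i → i ≤ r → (k : ℝ) * α * S (i + 1) = ((k : ℝ) * α + lam) * S i)
    (h3 : ∀ i : ℕ, r + 1 ≤ i → i ≤ k - 1 → S (i + 1) = S i)
    (h4 : 0 = γ * I₁ - (k : ℝ) * α * S k + lam * ∑ i ∈ Finset.range (r + 1), S i)
    (h5 : (β₁ / N) * S 0 = γ)
    (h6 : ∑ i ∈ Finset.range (k + 1), S i + I₁ = N) :
    β₂ / (γ * N) * ∑ i ∈ Finset.range (r + 1), S i =
      β₂ / β₁ *
        ((γ * lam * ((k : ℝ) - (r : ℝ)) + (β₁ + lam) * ((k : ℝ) * α)) *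
            ((k : ℝ) * α + lam) ^ r - β₁ * ((k : ℝ) * α) ^ (r + 1)) /
        (γ * ((k : ℝ) * α + ((k : ℝ) - (r : ℝ)) * lam) * ((k : ℝ) * α + lam) ^ r +
          (lam - γ) * ((k : ℝ) * α) ^ (r + 1)) := by
  set A : ℝ := (k : ℝ) * α with hAdef
  have hA : 0 < A := by
    have : (2:ℝ) ≤ (k:ℝ) := by exact_mod_cast hk
    have : (0:ℝ) < (k:ℝ) := by linarith
    positivity
  have hrk' : r + 1 ≤ k := by omega
  have hcr : (r : ℝ) + 1 ≤ (k : ℝ) := by exact_mod_cast hrk'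
  have hN0 : N ≠ 0 := ne_of_gt hN
  have hβ₁0 : β₁ ≠ 0 := ne_of_gt hβ₁
  have hγ0 : γ ≠ 0 := ne_of_gt hγ
  have hL0 : lam ≠ 0 := ne_of_gt hlam
  have hA0 : A ≠ 0 := ne_of_gt hA
  have hR : (0:ℝ) < A ^ r := pow_pos hA r
  have hQ : (0:ℝ) < (A + lam) ^ r := pow_pos (by linarith) r
  -- S 0
  have hS0 : S 0 = γ * N / β₁ := by
    field_simp at h5 ⊢
    linarith [h5]
  -- geometric growth up to r+1
  have hpow : ∀ i, i ≤ r → A ^ i * S (i + 1) = (A + lam) ^ i * S 1 := by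
    intro i hi
    induction i with
    | zero => simp
    | succ n ih =>
      have hn : n ≤ r := Nat.le_of_succ_le hi
      have h2' := h2 (n + 1) (Nat.le_add_left 1 n) hi
      have := ih hn
      calc A ^ (n+1) * S (n+1+1) = A ^ n * (A * S (n+1+1)) := by ring
        _ = A ^ n * ((A + lam) * S (n+1)) := by rw [h2']
        _ = (A + lam) * (A ^ n * S (n+1)) := by ring
        _ = (A + lam) ^ (n+1) * S 1 := by rw [this]; ring
  -- constancy from r+1 to k
  have hconst : ∀ i, r + 1 ≤ i → i ≤ k → S i = S (r + 1) := by
    intro i hi1 hi2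
    induction i with
    | zero => omega
    | succ n ih =>
      rcases Nat.lt_or_ge (r + 1) (n + 1) with h | h
      · have hn1 : r + 1 ≤ n := by omega
        have hn2 : n ≤ k := by omega
        have := h3 n hn1 (by omega)
        rw [this]; exact ih hn1 (by omega)
      · have : n + 1 = r + 1 := by omega
        rw [this]
  -- telescoping sum
  have htel : ∀ m, m ≤ r → lam * ∑ i ∈ Finset.range (m + 1), S i
      = lam * S 0 + A * (S (m + 1) - S 1) := by
    intro m hm
    induction m with
    | zero => simp
    | succ n ih =>
      have hn : n ≤ r := Nat.le_of_succ_le hm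
      have h2' := h2 (n + 1) (Nat.le_add_left 1 n) hm
      rw [Finset.sum_range_succ, mul_add, ih hn]
      have : A * S (n + 1 + 1) = (A + lam) * S (n + 1) := h2'
      linarith [this]
  have hsumr := htel r le_rfl
  -- total sum split
  have hsplit : ∑ i ∈ Finset.range (k + 1), S i
      = (∑ i ∈ Finset.range (r + 1), S i) + ((k : ℝ) - (r : ℝ)) * S (r + 1) := by
    have h1' : Finset.range (r+1) ⊆ Finset.range (k+1) := by
      apply Finset.range_subset_range.mpr; omega
    rw [← Finset.sum_range_add_sum_Ico S (by omega : r + 1 ≤ k + 1)]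
    congr 1
    have : ∀ i ∈ Finset.Ico (r+1) (k+1), S i = S (r+1) := by
      intro i hi
      rw [Finset.mem_Ico] at hi
      exact hconst i hi.1 (by omega)
    rw [Finset.sum_congr rfl this, Finset.sum_const]
    have hcard : (Finset.Ico (r+1) (k+1)).card = k - r := by
      rw [Nat.card_Ico]; omega
    rw [hcard, nsmul_eq_mul]
    congr 1
    have : (r:ℝ) ≤ (k:ℝ) := by linarith
    push_cast [Nat.cast_sub (by omega : r ≤ k)]
    ring
  -- I₁ from h1 and h5
  have hI : γ * I₁ = A * S 1 - lam * S 0 := by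
    have : (β₁ / N) * S 0 * I₁ = γ * I₁ := by rw [h5]
    nlinarith [h1, this]
  -- S (r+1) in terms of S 1
  have hT : A ^ r * S (r + 1) = (A + lam) ^ r * S 1 := hpow r le_rfl
  -- the key linear equation for S 1
  set Q : ℝ := (A + lam) ^ r with hQdef
  set R : ℝ := A ^ r with hRdef
  set Den : ℝ := γ * (A + ((k:ℝ) - (r:ℝ)) * lam) * Q + (lam - γ) * (A * R) with hDen
  have hDenpos : 0 < Den := by
    have hQR : R ≤ Q := by
      apply pow_le_pow_left₀ (le_of_lt hA) (by linarith)
    have hck : (1:ℝ) ≤ (k:ℝ) - (r:ℝ) := by linarith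
    have e1 : Den = γ * A * (Q - R) + γ * ((k:ℝ) - (r:ℝ)) * lam * Q + lam * A * R := by
      rw [hDen]; ring
    rw [e1]
    have t1 : 0 ≤ γ * A * (Q - R) := by
      apply mul_nonneg (by positivity); linarith
    have t2 : 0 < γ * ((k:ℝ) - (r:ℝ)) * lam * Q := by
      apply mul_pos; apply mul_pos; apply mul_pos hγ; linarith
      exact hlam; exact hQ
    have t3 : 0 < lam * A * R := by positivity
    linarith
  have hDen0 : Den ≠ 0 := ne_of_gt hDenpos
  -- equation from h6
  have hS1 : S 1 * Den = lam * R * (γ * N - (γ - lam) * S 0) := by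
    -- multiply h6 by γ * lam * R
    have e6 : (∑ i ∈ Finset.range (r + 1), S i) + ((k:ℝ) - (r:ℝ)) * S (r+1) + I₁ = N := by
      rw [← hsplit]; linarith [h6]
    have e6' : γ * lam * R * ((∑ i ∈ Finset.range (r + 1), S i)
        + ((k:ℝ) - (r:ℝ)) * S (r+1) + I₁) = γ * lam * R * N := by rw [e6]
    have hRT : R * S (r + 1) = Q * S 1 := hT
    rw [hDen]
    linear_combination (γ * lam * R) * e6 - (γ * R) * hsumr - (lam * R) * hI -
      (γ * (((k:ℝ) - (r:ℝ)) * lam + A)) * hRT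
  -- now compute the goal
  have hSig : ∑ i ∈ Finset.range (r + 1), S i = S 0 + A * (S (r+1) - S 1) / lam := by
    field_simp
    linarith [hsumr]
  have hSr1 : S (r + 1) = Q * S 1 / R := by
    field_simp
    linarith [hT]
  rw [hSig, hSr1, hS0]
  have hS1' : S 1 = lam * R * (γ * N - (γ - lam) * (γ * N / β₁)) / Den := by
    rw [hS0] at hS1
    rw [eq_div_iff hDen0]
    linear_combination hS1
  rw [hS1']
  rw [hDen, hQdef, hRdef]
  have hD' : γ * (A + ((k:ℝ) - (r:ℝ)) * lam) * (A + lam) ^ r + (lam - γ) * (A * A ^ r) ≠ 0 := by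
    rw [hDen, hQdef, hRdef] at hDen0; exact hDen0
  have hRne : (A:ℝ) ^ r ≠ 0 := pow_ne_zero _ hA0
  have hQne : ((A:ℝ) + lam) ^ r ≠ 0 := pow_ne_zero _ (by positivity)
  have hD2 : γ * (A + ((k:ℝ) - (r:ℝ)) * lam) * (A + lam) ^ r + (lam - γ) * A ^ (r + 1) ≠ 0 :=
    fun h => hD' (by linear_combination h - (lam - γ) * (pow_succ A r))
  field_simp [hD', hD2, hRne, hQne]
  rw [one_add_div (fun h => hD' (by linear_combination h)), div_eq_div_iff (fun h => hD' (by linear_combination h)) (fun h => hD2 (by linear_combination h))]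
  ring
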